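/- Given a Szegő system, fix m ≥ 1, a d-tuple Z = (Z_1,…,Z_d) of m×m complex matrices and an integer n ≥ 1, and write Z^* := (Z_1^*,…,Z_d^*). Then: φ^#_{σ(n)}(Z^*)^* φ^#_{σ(n)}(Z^*) = ∑_{σ : |σ| = n} φ_σ(Z^*)^* φ_σ(Z^*) + (I_m − ∑_{k=1}^d Z_k Z_k^*) + ∑_{σ : 1 ≤ |σ| ≤ n−1} φ_σ(Z^*)^* (I_m − ∑_{k=1}^d Z_k Z_k^*) φ_σ(Z^*). -/

import Mathlib

open scoped BigOperators ComplexOrder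

/-- The shortlex (length-then-lexicographic) order on words in `F_d^+`. -/
def ShortlexLE {d : ℕ} (σ τ : List (Fin d)) : Prop :=
  σ.length < τ.length ∨ (σ.length = τ.length ∧ (σ = τ ∨ List.Lex (· < ·) σ τ))

/-- The defect `d_σ := √(1 - |γ_σ|²)`. -/
noncomputable def defect {d : ℕ} (γ : List (Fin d) → ℂ) (σ : List (Fin d)) : ℝ :=
  Real.sqrt (1 - ‖γ σ‖ ^ 2)

/-- A Szegő system: Verblunsky coefficients `γ : F_d^+ → ℂ` with `γ_∅ = 0`, `|γ_σ| < 1`,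
together with families of noncommutative polynomials `φ, φr (= φ^#)` with `φ_∅ = φ^#_∅ = 1`
satisfying the Szegő recurrences, where `e : ℕ ≃ F_d^+` is the shortlex order isomorphism and
`τ - 1 := e (e⁻¹ τ - 1)` is the immediate shortlex predecessor. -/
structure SzegoSystem (d : ℕ) where
  /-- the shortlex enumeration of `F_d^+` -/
  e : ℕ ≃ List (Fin d)
  /-- `e` is an order isomorphism onto the shortlex order -/
  he : ∀ m n : ℕ, m ≤ n ↔ ShortlexLE (e m) (e n)
  /-- the Verblunsky coefficients -/
  γ : List (Fin d) → ℂ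
  hγ0 : γ [] = 0
  hγlt : ∀ σ : List (Fin d), ‖γ σ‖ < 1
  /-- the orthonormal polynomials -/
  φ : List (Fin d) → FreeAlgebra ℂ (Fin d)
  /-- the reverse polynomials `φ^#` -/
  φr : List (Fin d) → FreeAlgebra ℂ (Fin d)
  hφ0 : φ [] = 1
  hφr0 : φr [] = 1
  recφ : ∀ (k : Fin d) (σ : List (Fin d)),
    φ (k :: σ) = (((defect γ (k :: σ) : ℝ) : ℂ))⁻¹ •
      (FreeAlgebra.ι ℂ k * φ σ - γ (k :: σ) • φr (e (e.symm (k :: σ) - 1)))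
  recφr : ∀ (k : Fin d) (σ : List (Fin d)),
    φr (k :: σ) = (((defect γ (k :: σ) : ℝ) : ℂ))⁻¹ •
      ((-(starRingEnd ℂ (γ (k :: σ)))) • (FreeAlgebra.ι ℂ k * φ σ) +
        φr (e (e.symm (k :: σ) - 1)))

/-- Evaluation of a noncommutative polynomial at a `d`-tuple of `m×m` matrices. -/
noncomputable def evalM {d m : ℕ} (A : Fin d → Matrix (Fin m) (Fin m) ℂ) :
    FreeAlgebra ℂ (Fin d) →ₐ[ℂ] Matrix (Fin m) (Fin m) ℂ :=
  FreeAlgebra.lift ℂ A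

/-- The shortlex-largest word of length `n`: the largest generator repeated `n` times. -/
def sigmaWord (d : ℕ) (hd : 1 ≤ d) (n : ℕ) : List (Fin d) :=
  List.replicate n (⟨d - 1, by omega⟩ : Fin d)

/- ========= auxiliary lemmas ========= -/

lemma key_alg {R : Type*} [Ring R] [StarRing R] [Algebra ℂ R] [StarModule ℂ R]
    (A B : R) (g : ℂ) (c : ℂ) (hc : star c = c) (hc0 : c ≠ 0)
    (hc2 : c * c = 1 - g * star g) :
    star (c⁻¹ • (A - g • B)) * (c⁻¹ • (A - g • B)) -
      star (c⁻¹ • ((-(starRingEnd ℂ g)) • A + B)) * (c⁻¹ • ((-(starRingEnd ℂ g)) • A + B)) =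
    star A * A - star B * B := by
  have hc' : (starRingEnd ℂ) c = c := hc
  have hc2' : c * c = 1 - g * (starRingEnd ℂ) g := hc2
  simp only [Complex.star_def, star_smul, star_sub, star_add, star_neg, star_star,
    map_mul, map_inv₀, hc', RingHomCompTriple.comp_apply, Complex.conj_conj,
    RingHom.id_apply, neg_mul, mul_neg, neg_neg,
    smul_mul_assoc, mul_smul_comm, sub_mul, mul_sub, add_mul, mul_add, neg_smul, smul_neg,
    smul_smul, smul_sub, smul_add]
  match_scalars
  all_goals field_simp
  all_goals first
  | linear_combination ((-4) : ℂ) * hc2'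
  | linear_combination ((-3) : ℂ) * hc2'
  | linear_combination ((-2) : ℂ) * hc2'
  | linear_combination ((-1) : ℂ) * hc2'
  | ring1
  | linear_combination ((1) : ℂ) * hc2'
  | linear_combination ((2) : ℂ) * hc2'
  | linear_combination ((3) : ℂ) * hc2'
  | linear_combination ((4) : ℂ) * hc2'
  | linear_combination (c*c + (-4)) * hc2'
  | linear_combination (c*c + (-3)) * hc2'
  | linear_combination (c*c + (-2)) * hc2'
  | linear_combination (c*c + (-1)) * hc2'
  | linear_combination (c*c) * hc2'
  | linear_combination (c*c + 1) * hc2'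
  | linear_combination (c*c + 2) * hc2'
  | linear_combination (c*c + 3) * hc2'
  | linear_combination (c*c + 4) * hc2'
  | linear_combination (-(c*c) + (-4)) * hc2'
  | linear_combination (-(c*c) + (-3)) * hc2'
  | linear_combination (-(c*c) + (-2)) * hc2'
  | linear_combination (-(c*c) + (-1)) * hc2'
  | linear_combination (-(c*c)) * hc2'
  | linear_combination (-(c*c) + 1) * hc2'
  | linear_combination (-(c*c) + 2) * hc2'
  | linear_combination (-(c*c) + 3) * hc2'
  | linear_combination (-(c*c) + 4) * hc2'

lemma lex_max {d : ℕ} (hd : 1 ≤ d) (l : List (Fin d)) :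
    l = List.replicate l.length (⟨d - 1, by omega⟩ : Fin d) ∨
      List.Lex (· < ·) l (List.replicate l.length (⟨d - 1, by omega⟩ : Fin d)) := by
  induction l with
  | nil => left; rfl
  | cons a s ih =>
    simp only [List.length_cons, List.replicate_succ]
    rcases lt_or_ge a (⟨d - 1, by omega⟩ : Fin d) with h | h
    · right; exact List.Lex.rel h
    · have ha : a = (⟨d - 1, by omega⟩ : Fin d) := by
        have := a.isLt
        apply le_antisymm _ h
        rw [Fin.le_def]
        simp; omega
      rcases ih with h1 | h1
      · left; rw [ha, ← h1]
      · right; rw [ha]; exact List.Lex.cons h1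

lemma shortlex_iff {d : ℕ} (hd : 1 ≤ d) (τ : List (Fin d)) (n : ℕ) :
    ShortlexLE τ (sigmaWord d hd n) ↔ τ.length ≤ n := by
  unfold ShortlexLE sigmaWord
  rw [List.length_replicate]
  constructor
  · rintro (h | ⟨h, -⟩) <;> omega
  · intro h
    rcases lt_or_eq_of_le h with h' | h'
    · exact Or.inl h'
    · exact Or.inr ⟨h', by rw [← h']; exact lex_max hd τ⟩

lemma symm_le_iff {d : ℕ} (S : SzegoSystem d) (hd : 1 ≤ d) (τ : List (Fin d)) (n : ℕ) :
    S.e.symm τ ≤ S.e.symm (sigmaWord d hd n) ↔ τ.length ≤ n := by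
  rw [S.he, S.e.apply_symm_apply, S.e.apply_symm_apply, shortlex_iff hd]

lemma telescope {M : Type*} [AddCommGroup M] (g : ℕ → M) {a b : ℕ} (h : a ≤ b) :
    ∑ j ∈ Finset.Ioc a b, (g j - g (j - 1)) = g b - g a := by
  induction b, h using Nat.le_induction with
  | base => simp
  | succ b hb ih =>
    rw [Finset.sum_Ioc_succ_top (by omega), ih]
    simp

lemma ofFn_getD {d n : ℕ} (a : Fin d) (l : List (Fin d)) (h : l.length = n) :
    List.ofFn (fun i : Fin n => l.getD i a) = l := by
  apply List.ext_getElem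
  · simp [h]
  · intro i h1 h2
    simp only [List.getElem_ofFn]
    rw [List.getD_eq_getElem (hn := h2)]

lemma reindex {d : ℕ} (S : SzegoSystem d) (hd : 1 ≤ d) {M : Type*} [AddCommMonoid M]
    (G : List (Fin d) → M) (n : ℕ) :
    ∑ f : Fin (n + 1) → Fin d, G (List.ofFn f) =
      ∑ j ∈ Finset.Ioc (S.e.symm (sigmaWord d hd n)) (S.e.symm (sigmaWord d hd (n + 1))),
        G (S.e j) := by
  refine Finset.sum_nbij' (i := fun f => S.e.symm (List.ofFn f))
    (j := fun j => fun i : Fin (n + 1) => (S.e j).getD i (⟨0, by omega⟩ : Fin d))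
    ?_ ?_ ?_ ?_ ?_
  · intro f _
    rw [Finset.mem_Ioc]
    constructor
    · have h1 : ¬ S.e.symm (List.ofFn f) ≤ S.e.symm (sigmaWord d hd n) := by
        rw [symm_le_iff S hd]
        simp
      exact lt_of_not_ge h1
    · rw [symm_le_iff S hd]
      simp
  · intro j hj
    exact Finset.mem_univ _
  · intro f _
    funext i
    simp only [Equiv.apply_symm_apply]
    rw [List.getD_eq_getElem (hn := by simp [i.isLt]), List.getElem_ofFn]
  · intro j hj
    rw [Finset.mem_Ioc] at hj
    have hlen : (S.e j).length = n + 1 := by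
      have h1 : (S.e j).length ≤ n + 1 := by
        rw [← symm_le_iff S hd (S.e j) (n + 1), Equiv.symm_apply_apply]
        exact hj.2
      have h2 : ¬ (S.e j).length ≤ n := by
        rw [← symm_le_iff S hd (S.e j) n, Equiv.symm_apply_apply]
        omega
      omega
    rw [ofFn_getD _ _ hlen, Equiv.symm_apply_apply]
  · intro f _
    simp


private noncomputable def Qm {d m : ℕ} (S : SzegoSystem d) (Z : Fin d → Matrix (Fin m) (Fin m) ℂ)
    (τ : List (Fin d)) : Matrix (Fin m) (Fin m) ℂ :=
  star (evalM (fun j => star (Z j)) (S.φ τ)) * evalM (fun j => star (Z j)) (S.φ τ)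

private noncomputable def Rm {d m : ℕ} (S : SzegoSystem d) (Z : Fin d → Matrix (Fin m) (Fin m) ℂ)
    (τ : List (Fin d)) : Matrix (Fin m) (Fin m) ℂ :=
  star (evalM (fun j => star (Z j)) (S.φr τ)) * evalM (fun j => star (Z j)) (S.φr τ)

private noncomputable def Tm {d m : ℕ} (S : SzegoSystem d) (Z : Fin d → Matrix (Fin m) (Fin m) ℂ)
    (τ : List (Fin d)) : Matrix (Fin m) (Fin m) ℂ :=
  star (evalM (fun j => star (Z j)) (S.φ τ)) * (∑ k : Fin d, Z k * star (Z k)) *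
    evalM (fun j => star (Z j)) (S.φ τ)

private noncomputable def Pm {d m : ℕ} (S : SzegoSystem d) (Z : Fin d → Matrix (Fin m) (Fin m) ℂ)
    (τ : List (Fin d)) : Matrix (Fin m) (Fin m) ℂ :=
  star (evalM (fun j => star (Z j)) (S.φ τ)) * (1 - ∑ k : Fin d, Z k * star (Z k)) *
    evalM (fun j => star (Z j)) (S.φ τ)

lemma Pm_eq {d m : ℕ} (S : SzegoSystem d) (Z : Fin d → Matrix (Fin m) (Fin m) ℂ)
    (τ : List (Fin d)) : Pm S Z τ = Qm S Z τ - Tm S Z τ := by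
  simp only [Pm, Qm, Tm, mul_sub, sub_mul, mul_one]

lemma Rm_nil {d m : ℕ} (S : SzegoSystem d) (Z : Fin d → Matrix (Fin m) (Fin m) ℂ) :
    Rm S Z [] = 1 := by
  simp [Rm, S.hφr0]

lemma step {d m : ℕ} (S : SzegoSystem d) (Z : Fin d → Matrix (Fin m) (Fin m) ℂ)
    (k : Fin d) (σ : List (Fin d)) :
    Qm S Z (k :: σ) - Rm S Z (k :: σ) =
      star (evalM (fun j => star (Z j)) (S.φ σ)) * (Z k * star (Z k)) *
          evalM (fun j => star (Z j)) (S.φ σ) -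
        Rm S Z (S.e (S.e.symm (k :: σ) - 1)) := by
  set g := S.γ (k :: σ) with hg
  set c : ℂ := ((defect S.γ (k :: σ) : ℝ) : ℂ) with hcdef
  have habs : ‖g‖ < 1 := S.hγlt _
  have hpos : (0:ℝ) < 1 - ‖g‖ ^ 2 := by nlinarith [norm_nonneg g]
  have hdef : defect S.γ (k :: σ) ^ 2 = 1 - ‖g‖ ^ 2 := Real.sq_sqrt hpos.le
  have hc0 : c ≠ 0 := by
    rw [hcdef, Complex.ofReal_ne_zero]
    exact ne_of_gt (Real.sqrt_pos.mpr hpos)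
  have hcstar : star c = c := by
    rw [hcdef, Complex.star_def, Complex.conj_ofReal]
  have hc2 : c * c = 1 - g * star g := by
    have h1 : (g * star g : ℂ) = ((‖g‖ ^ 2 : ℝ) : ℂ) := by
      rw [Complex.star_def, Complex.mul_conj, Complex.sq_norm]
    rw [h1, hcdef, ← Complex.ofReal_mul, ← sq, hdef]
    push_cast
    ring
  have h1 : evalM (fun j => star (Z j)) (S.φ (k :: σ)) =
      c⁻¹ • (star (Z k) * evalM (fun j => star (Z j)) (S.φ σ) -
        g • evalM (fun j => star (Z j)) (S.φr (S.e (S.e.symm (k :: σ) - 1)))) := by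
    rw [S.recφ]
    simp only [map_smul, map_sub, map_mul, evalM, FreeAlgebra.lift_ι_apply]
    rfl
  have h2 : evalM (fun j => star (Z j)) (S.φr (k :: σ)) =
      c⁻¹ • ((-(starRingEnd ℂ g)) • (star (Z k) * evalM (fun j => star (Z j)) (S.φ σ)) +
        evalM (fun j => star (Z j)) (S.φr (S.e (S.e.symm (k :: σ) - 1)))) := by
    rw [S.recφr]
    simp only [map_smul, map_add, map_mul, map_neg, evalM, FreeAlgebra.lift_ι_apply,
      smul_neg, neg_smul]
    rfl
  rw [Qm, Rm, h1, h2, key_alg _ _ g c hcstar hc0 hc2, star_mul, star_star, Rm]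
  simp only [mul_assoc]

lemma level {d m : ℕ} (hd : 1 ≤ d) (S : SzegoSystem d)
    (Z : Fin d → Matrix (Fin m) (Fin m) ℂ) (n : ℕ) :
    ∑ f : Fin (n + 1) → Fin d, Qm S Z (List.ofFn f) =
      (Rm S Z (sigmaWord d hd (n + 1)) - Rm S Z (sigmaWord d hd n)) +
        ∑ f : Fin n → Fin d, Tm S Z (List.ofFn f) := by
  have hle : S.e.symm (sigmaWord d hd n) ≤ S.e.symm (sigmaWord d hd (n + 1)) := by
    rw [symm_le_iff S hd]
    simp [sigmaWord]
  have hB : ∑ f : Fin (n + 1) → Fin d,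
      (Rm S Z (List.ofFn f) - Rm S Z (S.e (S.e.symm (List.ofFn f) - 1))) =
      Rm S Z (sigmaWord d hd (n + 1)) - Rm S Z (sigmaWord d hd n) := by
    rw [reindex S hd (fun τ => Rm S Z τ - Rm S Z (S.e (S.e.symm τ - 1))) n]
    have hcongr : ∀ j ∈ Finset.Ioc (S.e.symm (sigmaWord d hd n))
        (S.e.symm (sigmaWord d hd (n + 1))),
        Rm S Z (S.e j) - Rm S Z (S.e (S.e.symm (S.e j) - 1)) =
          (fun i => Rm S Z (S.e i)) j - (fun i => Rm S Z (S.e i)) (j - 1) := by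
      intro j _
      simp
    rw [Finset.sum_congr rfl hcongr, telescope _ hle, Equiv.apply_symm_apply,
      Equiv.apply_symm_apply]
  have hsplit : ∀ (F : List (Fin d) → Matrix (Fin m) (Fin m) ℂ),
      ∑ f : Fin (n + 1) → Fin d, F (List.ofFn f) =
        ∑ k : Fin d, ∑ f : Fin n → Fin d, F (k :: List.ofFn f) := by
    intro F
    rw [← (Fin.consEquiv (fun _ : Fin (n + 1) => Fin d)).sum_comp (fun f => F (List.ofFn f)),
      Fintype.sum_prod_type]
    refine Finset.sum_congr rfl fun k _ => Finset.sum_congr rfl fun f _ => ?_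
    congr 1
    rw [List.ofFn_succ]
    simp [Fin.consEquiv]
  have hA : ∑ f : Fin (n + 1) → Fin d,
      (Qm S Z (List.ofFn f) - (Rm S Z (List.ofFn f) - Rm S Z (S.e (S.e.symm (List.ofFn f) - 1)))) =
      ∑ f : Fin n → Fin d, Tm S Z (List.ofFn f) := by
    rw [hsplit (fun τ => Qm S Z τ - (Rm S Z τ - Rm S Z (S.e (S.e.symm τ - 1))))]
    have hterm : ∀ (k : Fin d) (f : Fin n → Fin d),
        Qm S Z (k :: List.ofFn f) - (Rm S Z (k :: List.ofFn f) -
          Rm S Z (S.e (S.e.symm (k :: List.ofFn f) - 1))) =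
        star (evalM (fun j => star (Z j)) (S.φ (List.ofFn f))) * (Z k * star (Z k)) *
          evalM (fun j => star (Z j)) (S.φ (List.ofFn f)) := by
      intro k f
      have h := step S Z k (List.ofFn f)
      calc Qm S Z (k :: List.ofFn f) - (Rm S Z (k :: List.ofFn f) -
              Rm S Z (S.e (S.e.symm (k :: List.ofFn f) - 1)))
          = (Qm S Z (k :: List.ofFn f) - Rm S Z (k :: List.ofFn f)) +
              Rm S Z (S.e (S.e.symm (k :: List.ofFn f) - 1)) := by abel
        _ = _ := by rw [h]; abel
    calc ∑ k : Fin d, ∑ f : Fin n → Fin d, (Qm S Z (k :: List.ofFn f) -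
            (Rm S Z (k :: List.ofFn f) - Rm S Z (S.e (S.e.symm (k :: List.ofFn f) - 1))))
        = ∑ k : Fin d, ∑ f : Fin n → Fin d,
            star (evalM (fun j => star (Z j)) (S.φ (List.ofFn f))) * (Z k * star (Z k)) *
              evalM (fun j => star (Z j)) (S.φ (List.ofFn f)) := by
          exact Finset.sum_congr rfl fun k _ => Finset.sum_congr rfl fun f _ => hterm k f
      _ = ∑ f : Fin n → Fin d, Tm S Z (List.ofFn f) := by
          rw [Finset.sum_comm]
          refine Finset.sum_congr rfl fun f _ => ?_
          simp only [Tm, Finset.mul_sum, Finset.sum_mul]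
  calc ∑ f : Fin (n + 1) → Fin d, Qm S Z (List.ofFn f)
      = ∑ f : Fin (n + 1) → Fin d,
          ((Rm S Z (List.ofFn f) - Rm S Z (S.e (S.e.symm (List.ofFn f) - 1))) +
            (Qm S Z (List.ofFn f) - (Rm S Z (List.ofFn f) -
              Rm S Z (S.e (S.e.symm (List.ofFn f) - 1))))) := by
        refine Finset.sum_congr rfl fun f _ => ?_
        abel
    _ = _ := by
        rw [Finset.sum_add_distrib, hB, hA]

/-- for `n ≥ 1` and a `d`-tuple `Z` of `m×m` matrices, writing
`Z^* := (Z_1^*,…,Z_d^*)`,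
`φ^#_{σ(n)}(Z^*)^* φ^#_{σ(n)}(Z^*) = ∑_{|σ| = n} φ_σ(Z^*)^* φ_σ(Z^*)
  + (I − ∑_k Z_k Z_k^*) + ∑_{1 ≤ |σ| ≤ n−1} φ_σ(Z^*)^* (I − ∑_k Z_k Z_k^*) φ_σ(Z^*)`. -/
theorem szego_reverse_identity {d m : ℕ} (hd : 1 ≤ d) (hm : 1 ≤ m) (S : SzegoSystem d)
    (Z : Fin d → Matrix (Fin m) (Fin m) ℂ) (n : ℕ) (hn : 1 ≤ n) :
    star (evalM (fun j => star (Z j)) (S.φr (sigmaWord d hd n))) *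
        evalM (fun j => star (Z j)) (S.φr (sigmaWord d hd n)) =
      (∑ f : Fin n → Fin d,
          star (evalM (fun j => star (Z j)) (S.φ (List.ofFn f))) *
            evalM (fun j => star (Z j)) (S.φ (List.ofFn f))) +
        (1 - ∑ k : Fin d, Z k * star (Z k)) +
        ∑ l ∈ Finset.Ico 1 n, ∑ f : Fin l → Fin d,
          star (evalM (fun j => star (Z j)) (S.φ (List.ofFn f))) *
            (1 - ∑ k : Fin d, Z k * star (Z k)) *
            evalM (fun j => star (Z j)) (S.φ (List.ofFn f)) := by
  have main : Rm S Z (sigmaWord d hd n) =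
      (∑ f : Fin n → Fin d, Qm S Z (List.ofFn f)) +
        (1 - ∑ k : Fin d, Z k * star (Z k)) +
        ∑ l ∈ Finset.Ico 1 n, ∑ f : Fin l → Fin d, Pm S Z (List.ofFn f) := by
    induction n, hn using Nat.le_induction with
    | base =>
      have hT : ∑ f : Fin 0 → Fin d, Tm S Z (List.ofFn f) =
          ∑ k : Fin d, Z k * star (Z k) := by
        have h1 : ∀ f : Fin 0 → Fin d, Tm S Z (List.ofFn f) =
            ∑ k : Fin d, Z k * star (Z k) := by
          intro f
          simp [Tm, S.hφ0]
        rw [Finset.sum_congr rfl fun f _ => h1 f]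
        simp
      have lev : ∑ f : Fin 1 → Fin d, Qm S Z (List.ofFn f) =
          (Rm S Z (sigmaWord d hd 1) - Rm S Z (sigmaWord d hd 0)) +
            ∑ f : Fin 0 → Fin d, Tm S Z (List.ofFn f) := level hd S Z 0
      have h0 : sigmaWord d hd 0 = [] := rfl
      rw [h0, Rm_nil, hT] at lev
      rw [Finset.Ico_self, Finset.sum_empty, add_zero]
      have e1 : Rm S Z (sigmaWord d hd 1) =
          (∑ f : Fin 1 → Fin d, Qm S Z (List.ofFn f)) + 1 -
            ∑ k : Fin d, Z k * star (Z k) := by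
        rw [lev]; abel
      rw [e1]; abel
    | succ n hn ih =>
      have lev := level hd S Z n
      have hP : ∑ f : Fin n → Fin d, Pm S Z (List.ofFn f) =
          ∑ f : Fin n → Fin d, Qm S Z (List.ofFn f) -
            ∑ f : Fin n → Fin d, Tm S Z (List.ofFn f) := by
        rw [← Finset.sum_sub_distrib]
        exact Finset.sum_congr rfl fun f _ => Pm_eq S Z _
      have e1 : Rm S Z (sigmaWord d hd (n + 1)) =
          (∑ f : Fin (n + 1) → Fin d, Qm S Z (List.ofFn f)) +
            Rm S Z (sigmaWord d hd n) - ∑ f : Fin n → Fin d, Tm S Z (List.ofFn f) := by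
        rw [lev]; abel
      rw [e1, ih, Finset.sum_Ico_succ_top hn, hP]
      abel
  simpa only [Qm, Rm, Pm] using main
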